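/- Let A ∈ ℂ^{m×n} have rows a_1ᴴ,…,a_mᴴ with ‖a_r‖₂ = 1 for all r, let x̂ ∈ ℂ^n, and let y ∈ ℝ^m with y_r = |⟨a_r, x̂⟩|². Let σ > 0 satisfy ‖A v‖₂ ≥ σ‖v‖₂ for all v ∈ ℂ^n. Fix x_0 ∈ ℂ^n and for each finite index sequence (r_1,…,r_l) ∈ {1,…,m}^l define iterates by x_k = x_{k−1} + (√(y_{r_k})·phase(⟨a_{r_k}, x_{k−1}⟩) − ⟨a_{r_k}, x_{k−1}⟩)·a_{r_k} for k = 1,…,l, and write x_l^{(r_1,…,r_l)} for the final iterate. Then for every l ≥ 0, (1/m^l) Σ_{(r_1,…,r_l) ∈ {1,…,m}^l} dist²(x_l^{(r_1,…,r_l)}, x̂) ≤ (1 − σ²/m)^l · dist²(x_0, x̂) + (4m/σ²)·max_{1≤r≤m} y_r. (Convergence of the randomized simple Kaczmarz method for phase retrieval with uniform row selection: the expectation equals the uniform average over index sequences.) -/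

import Mathlib

open scoped BigOperators ComplexConjugate

/-- phase(w) = w/|w| if w ≠ 0, else 1. -/
noncomputable def phase (w : ℂ) : ℂ := if w = 0 then 1 else w / (‖w‖ : ℂ)

/-- Euclidean norm of a complex vector. -/
noncomputable def evnorm {ι : Type*} [Fintype ι] (v : ι → ℂ) : ℝ :=
  Real.sqrt (∑ i, ‖v i‖ ^ 2)

/-- Euclidean norm of a real vector. -/
noncomputable def rvnorm {ι : Type*} [Fintype ι] (v : ι → ℝ) : ℝ :=
  Real.sqrt (∑ i, (v i) ^ 2)

/-- Standard Hermitian inner product, conjugate-linear in the first argument. -/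
noncomputable def hinner {n : ℕ} (a x : Fin n → ℂ) : ℂ := ∑ i, conj (a i) * x i

/-- dist(x, x̂) = min over unimodular ω of ‖x − ω·x̂‖₂. -/
noncomputable def pdist {n : ℕ} (x xhat : Fin n → ℂ) : ℝ :=
  ⨅ ω : {ω : ℂ // ‖ω‖ = 1}, evnorm (x - (ω : ℂ) • xhat)

/-- Operator (spectral) norm of a complex matrix w.r.t. Euclidean norms. -/
noncomputable def matOpNorm {ι κ : Type*} [Fintype ι] [Fintype κ] [DecidableEq κ]
    (M : Matrix ι κ ℂ) : ℝ :=
  ‖LinearMap.toContinuousLinearMap (Matrix.toEuclideanLin M)‖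

noncomputable def toE {n : ℕ} (v : Fin n → ℂ) : EuclideanSpace ℂ (Fin n) := WithLp.toLp 2 v

lemma evnorm_eq {n : ℕ} (v : Fin n → ℂ) : evnorm v = ‖toE v‖ := by
  rw [EuclideanSpace.norm_eq]; simp [evnorm, toE]

lemma hinner_eq {n : ℕ} (a x : Fin n → ℂ) : hinner a x = @inner ℂ _ _ (toE a) (toE x) := by
  simp [hinner, PiLp.inner_apply, RCLike.inner_apply, toE, mul_comm]

lemma phase_abs (w : ℂ) : ‖phase w‖ = 1 := by
  unfold phase
  split_ifs with h
  · simp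
  · rw [norm_div]
    simp [div_self (norm_ne_zero_iff.mpr h)]

instance : Nonempty {ω : ℂ // ‖ω‖ = 1} := ⟨⟨1, by simp⟩⟩

lemma pdist_nonneg {n : ℕ} (x xhat : Fin n → ℂ) : 0 ≤ pdist x xhat :=
  Real.iInf_nonneg fun _ => Real.sqrt_nonneg _

lemma pdist_le {n : ℕ} (x xhat : Fin n → ℂ) (ω : ℂ) (hω : ‖ω‖ = 1) :
    pdist x xhat ≤ evnorm (x - ω • xhat) :=
  ciInf_le ⟨0, by rintro _ ⟨ω', rfl⟩; exact Real.sqrt_nonneg _⟩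
    (⟨ω, hω⟩ : {ω : ℂ // ‖ω‖ = 1})

lemma pdist_attained {n : ℕ} (x xhat : Fin n → ℂ) :
    ∃ ω : ℂ, ‖ω‖ = 1 ∧ pdist x xhat = evnorm (x - ω • xhat) := by
  have hS : IsCompact {ω : ℂ | ‖ω‖ = 1} := by
    have : {ω : ℂ | ‖ω‖ = 1} = Metric.sphere (0 : ℂ) 1 := by
      ext ω; simp [Complex.dist_eq]
    rw [this]; exact isCompact_sphere 0 1
  have hne : ({ω : ℂ | ‖ω‖ = 1}).Nonempty := ⟨1, by simp⟩
  have hcont : ContinuousOn (fun ω : ℂ => evnorm (x - ω • xhat)) {ω : ℂ | ‖ω‖ = 1} := by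
    have : Continuous fun ω : ℂ => evnorm (x - ω • xhat) := by
      have : (fun ω : ℂ => evnorm (x - ω • xhat)) = fun ω : ℂ => ‖toE x - ω • toE xhat‖ := by
        funext ω; rw [evnorm_eq]; simp [toE]
      rw [this]; fun_prop
    exact this.continuousOn
  obtain ⟨ω₀, hω₀, hmin⟩ := hS.exists_isMinOn hne hcont
  exact ⟨ω₀, hω₀, le_antisymm (pdist_le _ _ _ hω₀) (le_ciInf fun ω => hmin ω.2)⟩

lemma norm_sq_update {n : ℕ} (u a : Fin n → ℂ) (ha : evnorm a = 1) (c : ℂ) :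
    evnorm (u + (c - hinner a u) • a) ^ 2
      = evnorm u ^ 2 - ‖hinner a u‖ ^ 2 + ‖c‖ ^ 2 := by
  set b : ℂ := hinner a u with hb
  set t : ℂ := c - b with ht
  have hA : ‖toE a‖ = 1 := by rw [← evnorm_eq, ha]
  have h1 : evnorm (u + t • a) = ‖toE u + t • toE a‖ := by rw [evnorm_eq]; simp [toE]
  rw [h1]
  have h2 : ‖toE u + t • toE a‖ ^ 2
      = ‖toE u‖ ^ 2 + 2 * Complex.re (t * conj b) + ‖t‖ ^ 2 := by
    rw [@norm_add_sq ℂ]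
    have : @inner ℂ _ _ (toE u) (t • toE a) = t * conj b := by
      rw [inner_smul_right]
      congr 1
      rw [← inner_conj_symm, ← hinner_eq, ← hb]
    rw [this, norm_smul, hA]
    simp
  rw [h2, ← evnorm_eq]
  have : 2 * Complex.re (t * conj b) + ‖t‖ ^ 2
      = ‖c‖ ^ 2 - ‖b‖ ^ 2 := by
    rw [ht]
    simp only [Complex.sq_norm, Complex.normSq_apply, Complex.mul_re, Complex.sub_re,
      Complex.sub_im, Complex.conj_re, Complex.conj_im]
    ring
  linarith [this]

lemma hinner_sub_smul {n : ℕ} (a x xh : Fin n → ℂ) (ω : ℂ) :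
    hinner a (x - ω • xh) = hinner a x - ω * hinner a xh := by
  simp only [hinner, Pi.sub_apply, Pi.smul_apply, smul_eq_mul, mul_sub, Finset.sum_sub_distrib,
    Finset.mul_sum]
  congr 1
  exact Finset.sum_congr rfl fun i _ => by ring

lemma evnorm_sq {ι : Type*} [Fintype ι] (v : ι → ℂ) :
    evnorm v ^ 2 = ∑ i, ‖v i‖ ^ 2 :=
  Real.sq_sqrt (Finset.sum_nonneg fun _ _ => sq_nonneg _)

lemma ofFn_cons {m l : ℕ} (r : Fin m) (seq : Fin l → Fin m) :
    List.ofFn (Fin.cons r seq) = r :: List.ofFn seq := by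
  rw [List.ofFn_succ]
  simp

lemma sum_fn_succ {m l : ℕ} (f : (Fin (l + 1) → Fin m) → ℝ) :
    ∑ seq : Fin (l + 1) → Fin m, f seq
      = ∑ r : Fin m, ∑ seq : Fin l → Fin m, f (Fin.cons r seq) := by
  have h : ∑ seq : Fin (l + 1) → Fin m, f seq
      = ∑ p : Fin m × (Fin l → Fin m), f (Fin.cons p.1 p.2) :=
    Fintype.sum_equiv (Fin.consEquiv fun _ => Fin m).symm _ _ fun seq => by
      simp [Fin.consEquiv, Fin.cons_self_tail]
  rw [h, Fintype.sum_prod_type]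

lemma key_step {m n : ℕ} (a : Fin m → Fin n → ℂ) (ha : ∀ r, evnorm (a r) = 1)
    (xhat : Fin n → ℂ) (y : Fin m → ℝ)
    (hy : ∀ r, y r = ‖hinner (a r) xhat‖ ^ 2)
    (σ : ℝ) (hσ : 0 < σ)
    (hsing : ∀ v : Fin n → ℂ, σ * evnorm v ≤ evnorm (fun r => hinner (a r) v))
    (step : (Fin n → ℂ) → Fin m → (Fin n → ℂ))
    (hstep : ∀ (x : Fin n → ℂ) (r : Fin m), step x r =
      x + ((Real.sqrt (y r) : ℂ) * phase (hinner (a r) x) - hinner (a r) x) • a r)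
    (S : ℝ) (hS : ∀ r, y r ≤ S) (x : Fin n → ℂ) :
    ∑ r : Fin m, pdist (step x r) xhat ^ 2
      ≤ ((m : ℝ) - σ ^ 2) * pdist x xhat ^ 2 + 4 * m * S := by
  obtain ⟨ω, hω, hpd⟩ := pdist_attained x xhat
  set u : Fin n → ℂ := x - ω • xhat with hu
  have habs : ∀ r, ‖hinner (a r) xhat‖ = Real.sqrt (y r) := by
    intro r
    rw [hy r, Real.sqrt_sq (norm_nonneg _)]
  have key : ∀ r : Fin m, pdist (step x r) xhat ^ 2
      ≤ evnorm u ^ 2 - ‖hinner (a r) u‖ ^ 2 + 4 * S := by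
    intro r
    set c : ℂ := (Real.sqrt (y r) : ℂ) * phase (hinner (a r) x) - ω * hinner (a r) xhat with hc
    have hvec : step x r - ω • xhat = u + (c - hinner (a r) u) • a r := by
      rw [hstep, hu]
      have : c - hinner (a r) (x - ω • xhat)
          = (Real.sqrt (y r) : ℂ) * phase (hinner (a r) x) - hinner (a r) x := by
        rw [hc, hinner_sub_smul]; ring
      rw [this]
      abel
    have h1 : pdist (step x r) xhat ≤ evnorm (step x r - ω • xhat) := pdist_le _ _ _ hω
    have h2 : pdist (step x r) xhat ^ 2 ≤ evnorm (step x r - ω • xhat) ^ 2 :=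
      pow_le_pow_left₀ (pdist_nonneg _ _) h1 2
    have h3 : evnorm (step x r - ω • xhat) ^ 2
        = evnorm u ^ 2 - ‖hinner (a r) u‖ ^ 2 + ‖c‖ ^ 2 := by
      rw [hvec, norm_sq_update _ _ (ha r)]
    have hcle : ‖c‖ ≤ 2 * Real.sqrt (y r) := by
      calc ‖c‖ ≤ ‖(Real.sqrt (y r) : ℂ) * phase (hinner (a r) x)‖
            + ‖ω * hinner (a r) xhat‖ := by
              rw [hc]; exact norm_sub_le _ _
        _ = Real.sqrt (y r) + Real.sqrt (y r) := by
              rw [norm_mul, norm_mul, phase_abs, hω, habs r, Complex.norm_real, Real.norm_eq_abs,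
                abs_of_nonneg (Real.sqrt_nonneg _)]
              ring
        _ = 2 * Real.sqrt (y r) := by ring
    have hc2 : ‖c‖ ^ 2 ≤ 4 * S := by
      have h4 : ‖c‖ ^ 2 ≤ (2 * Real.sqrt (y r)) ^ 2 :=
        pow_le_pow_left₀ (norm_nonneg _) hcle 2
      have h5 : (2 * Real.sqrt (y r)) ^ 2 = 4 * y r := by
        rw [mul_pow, Real.sq_sqrt]
        · ring
        · rw [hy r]; exact sq_nonneg _
      have := hS r
      nlinarith
    linarith [h2, h3.le, hc2]
  have hsum : ∑ r : Fin m, pdist (step x r) xhat ^ 2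
      ≤ ∑ r : Fin m, (evnorm u ^ 2 - ‖hinner (a r) u‖ ^ 2 + 4 * S) :=
    Finset.sum_le_sum fun r _ => key r
  have hAu : σ ^ 2 * evnorm u ^ 2 ≤ ∑ r : Fin m, ‖hinner (a r) u‖ ^ 2 := by
    have h1 := hsing u
    have h2 : (σ * evnorm u) ^ 2 ≤ evnorm (fun r => hinner (a r) u) ^ 2 :=
      pow_le_pow_left₀ (mul_nonneg hσ.le (Real.sqrt_nonneg _)) h1 2
    rw [evnorm_sq] at h2
    calc σ ^ 2 * evnorm u ^ 2 = (σ * evnorm u) ^ 2 := by ring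
      _ ≤ _ := h2
  have hexp : ∑ r : Fin m, (evnorm u ^ 2 - ‖hinner (a r) u‖ ^ 2 + 4 * S)
      = (m : ℝ) * evnorm u ^ 2 - (∑ r : Fin m, ‖hinner (a r) u‖ ^ 2)
        + 4 * m * S := by
    rw [Finset.sum_add_distrib, Finset.sum_sub_distrib, Finset.sum_const, Finset.sum_const]
    simp [Finset.card_univ]
    ring
  rw [hexp] at hsum
  have : (m : ℝ) * evnorm u ^ 2 - (∑ r : Fin m, ‖hinner (a r) u‖ ^ 2) + 4 * m * S
      ≤ ((m : ℝ) - σ ^ 2) * evnorm u ^ 2 + 4 * m * S := by nlinarith [hAu]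
  rw [hpd]
  linarith

lemma sigma_sq_le {m n : ℕ} (hn : 0 < n) (a : Fin m → Fin n → ℂ)
    (ha : ∀ r, evnorm (a r) = 1) (σ : ℝ) (hσ : 0 < σ)
    (hsing : ∀ v : Fin n → ℂ, σ * evnorm v ≤ evnorm (fun r => hinner (a r) v)) :
    σ ^ 2 ≤ (m : ℝ) := by
  set i0 : Fin n := ⟨0, hn⟩
  set e0 : Fin n → ℂ := fun i => if i = i0 then 1 else 0 with he0
  have he : evnorm e0 = 1 := by
    have : ∑ i, ‖e0 i‖ ^ 2 = 1 := by
      rw [he0]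
      rw [Finset.sum_eq_single i0]
      · simp
      · intro i _ hi; simp [hi]
      · intro h; exact absurd (Finset.mem_univ i0) h
    rw [evnorm, this, Real.sqrt_one]
  have hin : ∀ r, hinner (a r) e0 = conj (a r i0) := by
    intro r
    rw [hinner, Finset.sum_eq_single i0]
    · simp [he0]
    · intro i _ hi; simp [he0, hi]
    · intro h; exact absurd (Finset.mem_univ i0) h
  have h1 := hsing e0
  rw [he, mul_one] at h1
  have h2 : σ ^ 2 ≤ evnorm (fun r => hinner (a r) e0) ^ 2 := pow_le_pow_left₀ hσ.le h1 2
  rw [evnorm_sq] at h2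
  have h3 : ∑ r, ‖hinner (a r) e0‖ ^ 2 ≤ (m : ℝ) := by
    have hterm : ∀ r : Fin m, ‖hinner (a r) e0‖ ^ 2 ≤ 1 := by
      intro r
      rw [hin r, Complex.norm_conj]
      have h4 : ‖a r i0‖ ^ 2 ≤ ∑ i, ‖a r i‖ ^ 2 :=
        Finset.single_le_sum (f := fun i => ‖a r i‖ ^ 2)
          (fun i _ => sq_nonneg _) (Finset.mem_univ i0)
      have h5 : ∑ i, ‖a r i‖ ^ 2 = 1 := by
        have := ha r
        rw [evnorm] at this
        have h6 := congrArg (· ^ 2) this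
        simpa [Real.sq_sqrt (Finset.sum_nonneg fun i _ => sq_nonneg (‖a r i‖))] using h6
      linarith
    calc ∑ r, ‖hinner (a r) e0‖ ^ 2 ≤ ∑ _r : Fin m, (1 : ℝ) :=
          Finset.sum_le_sum fun r _ => hterm r
      _ = (m : ℝ) := by simp
  linarith

/-- Convergence of the randomized simple Kaczmarz method for phase
retrieval with uniform row selection; the expectation is the uniform average over
all index sequences of length l. -/
theorem stmt11 {m n : ℕ} (a : Fin m → Fin n → ℂ) (ha : ∀ r, evnorm (a r) = 1)
    (xhat : Fin n → ℂ) (y : Fin m → ℝ)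
    (hy : ∀ r, y r = ‖hinner (a r) xhat‖ ^ 2)
    (σ : ℝ) (hσ : 0 < σ)
    (hsing : ∀ v : Fin n → ℂ, σ * evnorm v ≤ evnorm (fun r => hinner (a r) v))
    (x0 : Fin n → ℂ)
    (step : (Fin n → ℂ) → Fin m → (Fin n → ℂ))
    (hstep : ∀ (x : Fin n → ℂ) (r : Fin m), step x r =
      x + ((Real.sqrt (y r) : ℂ) * phase (hinner (a r) x) - hinner (a r) x) • a r) :
    ∀ l : ℕ,
      (1 / (m : ℝ) ^ l) * ∑ seq : Fin l → Fin m,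
          pdist ((List.ofFn seq).foldl step x0) xhat ^ 2 ≤
        (1 - σ ^ 2 / (m : ℝ)) ^ l * pdist x0 xhat ^ 2 +
          (4 * (m : ℝ) / σ ^ 2) * ⨆ r, y r := by
  intro l
  rcases Nat.eq_zero_or_pos m with hm | hm
  · subst hm
    cases l with
    | zero =>
      simp [Real.iSup_of_isEmpty]
    | succ l =>
      have hE : IsEmpty (Fin (l + 1) → Fin 0) := ⟨fun f => (f 0).elim0⟩
      rw [Finset.univ_eq_empty, Finset.sum_empty, mul_zero]
      simp [Real.iSup_of_isEmpty]
      positivity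
  have hmR : (0 : ℝ) < m := by exact_mod_cast hm
  -- the supremum S
  set S : ℝ := ⨆ r, y r with hSdef
  have hy0 : ∀ r, 0 ≤ y r := fun r => by rw [hy r]; positivity
  have hSub : ∀ r, y r ≤ S := fun r =>
    le_ciSup (Set.Finite.bddAbove (Set.finite_range y)) r
  have hS0 : 0 ≤ S := le_trans (hy0 ⟨0, hm⟩) (hSub ⟨0, hm⟩)
  rcases Nat.eq_zero_or_pos n with hn | hn
  · -- n = 0 : all distances are zero
    subst hn
    have hpz : ∀ x : Fin 0 → ℂ, pdist x xhat = 0 := by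
      intro x
      have : ∀ ω : {ω : ℂ // ‖ω‖ = 1}, evnorm (x - (ω : ℂ) • xhat) = 0 := by
        intro ω; simp [evnorm]
      rw [pdist]
      simp only [this]
      exact ciInf_const
    have hL : ∀ v : Fin 0 → ℂ, pdist v xhat ^ 2 = 0 := fun v => by rw [hpz v]; ring
    simp only [hL, Finset.sum_const, smul_zero, mul_zero, zero_add]
    positivity
  -- main case
  have hσm : σ ^ 2 ≤ (m : ℝ) := sigma_sq_le hn a ha σ hσ hsing
  set q : ℝ := 1 - σ ^ 2 / (m : ℝ) with hqdef
  have hq0 : 0 ≤ q := by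
    rw [hqdef]
    have : σ ^ 2 / (m : ℝ) ≤ 1 := by
      rw [div_le_one hmR]; exact hσm
    linarith
  have main : ∀ (L : ℕ) (x : Fin n → ℂ),
      (1 / (m : ℝ) ^ L) * ∑ seq : Fin L → Fin m,
          pdist ((List.ofFn seq).foldl step x) xhat ^ 2 ≤
        q ^ L * pdist x xhat ^ 2 + (4 * S) * ∑ k ∈ Finset.range L, q ^ k := by
    intro L
    induction L with
    | zero =>
      intro x
      simp
    | succ L IH =>
      intro x
      rw [sum_fn_succ (fun seq => pdist ((List.ofFn seq).foldl step x) xhat ^ 2)]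
      have hrw : ∀ r : Fin m,
          ∑ seq : Fin L → Fin m,
              pdist ((List.ofFn (Fin.cons r seq)).foldl step x) xhat ^ 2
            = ∑ seq : Fin L → Fin m,
              pdist ((List.ofFn seq).foldl step (step x r)) xhat ^ 2 := by
        intro r
        refine Finset.sum_congr rfl fun seq _ => ?_
        rw [ofFn_cons]
        rfl
      simp only [hrw]
      set G : Fin m → ℝ := fun r =>
        ∑ seq : Fin L → Fin m, pdist ((List.ofFn seq).foldl step (step x r)) xhat ^ 2 with hG
      set Sgeo : ℝ := ∑ k ∈ Finset.range L, q ^ k with hSgeo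
      have e1 : (1 / (m : ℝ) ^ (L + 1)) * ∑ r : Fin m, G r
          = (1 / (m : ℝ)) * ∑ r : Fin m, ((1 / (m : ℝ) ^ L) * G r) := by
        rw [Finset.mul_sum, Finset.mul_sum]
        refine Finset.sum_congr rfl fun r _ => ?_
        rw [pow_succ]
        ring
      rw [e1]
      have e2 : (1 / (m : ℝ)) * ∑ r : Fin m, ((1 / (m : ℝ) ^ L) * G r)
          ≤ (1 / (m : ℝ)) * ∑ r : Fin m, (q ^ L * pdist (step x r) xhat ^ 2 + (4 * S) * Sgeo) := by
        refine mul_le_mul_of_nonneg_left (Finset.sum_le_sum fun r _ => IH (step x r)) ?_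
        positivity
      refine e2.trans ?_
      have e3 : (1 / (m : ℝ)) * ∑ r : Fin m, (q ^ L * pdist (step x r) xhat ^ 2 + (4 * S) * Sgeo)
          = q ^ L * ((1 / (m : ℝ)) * ∑ r : Fin m, pdist (step x r) xhat ^ 2) + (4 * S) * Sgeo := by
        rw [Finset.sum_add_distrib, Finset.sum_const, Finset.card_univ, Fintype.card_fin,
          nsmul_eq_mul, ← Finset.mul_sum]
        field_simp
      rw [e3]
      have e4 : (1 / (m : ℝ)) * ∑ r : Fin m, pdist (step x r) xhat ^ 2
          ≤ q * pdist x xhat ^ 2 + 4 * S := by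
        have hks := key_step a ha xhat y hy σ hσ hsing step hstep S hSub x
        have : (1 / (m : ℝ)) * ∑ r : Fin m, pdist (step x r) xhat ^ 2
            ≤ (1 / (m : ℝ)) * (((m : ℝ) - σ ^ 2) * pdist x xhat ^ 2 + 4 * m * S) :=
          mul_le_mul_of_nonneg_left hks (by positivity)
        refine this.trans (le_of_eq ?_)
        rw [hqdef]
        field_simp
      have e5 : q ^ L * ((1 / (m : ℝ)) * ∑ r : Fin m, pdist (step x r) xhat ^ 2)
          ≤ q ^ L * (q * pdist x xhat ^ 2 + 4 * S) :=
        mul_le_mul_of_nonneg_left e4 (pow_nonneg hq0 L)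
      have e6 : q ^ L * (q * pdist x xhat ^ 2 + 4 * S) + (4 * S) * Sgeo
          = q ^ (L + 1) * pdist x xhat ^ 2 + (4 * S) * ∑ k ∈ Finset.range (L + 1), q ^ k := by
        rw [geom_sum_succ', ← hSgeo, pow_succ]
        ring
      exact le_trans (add_le_add_left e5 (4 * S * Sgeo)) (le_of_eq e6)
  refine (main l x0).trans ?_
  have hgeo : ∑ k ∈ Finset.range l, q ^ k ≤ (m : ℝ) / σ ^ 2 := by
    have hgm := geom_sum_mul q l
    have hql : 0 ≤ q ^ l := pow_nonneg hq0 l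
    have h1 : (∑ k ∈ Finset.range l, q ^ k) * (σ ^ 2 / (m : ℝ)) ≤ 1 := by
      have : q - 1 = -(σ ^ 2 / (m : ℝ)) := by rw [hqdef]; ring
      rw [this] at hgm
      nlinarith [hgm]
    rw [le_div_iff₀ (by positivity : (0 : ℝ) < σ ^ 2)]
    have h2 : (∑ k ∈ Finset.range l, q ^ k) * (σ ^ 2 / (m : ℝ)) * (m : ℝ) ≤ 1 * (m : ℝ) :=
      mul_le_mul_of_nonneg_right h1 hmR.le
    calc (∑ k ∈ Finset.range l, q ^ k) * σ ^ 2
        = (∑ k ∈ Finset.range l, q ^ k) * (σ ^ 2 / (m : ℝ)) * (m : ℝ) := by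
          field_simp
      _ ≤ 1 * (m : ℝ) := h2
      _ = (m : ℝ) := one_mul _
  have hfin : (4 * S) * ∑ k ∈ Finset.range l, q ^ k ≤ (4 * (m : ℝ) / σ ^ 2) * S := by
    calc (4 * S) * ∑ k ∈ Finset.range l, q ^ k
        ≤ (4 * S) * ((m : ℝ) / σ ^ 2) := by
          exact mul_le_mul_of_nonneg_left hgeo (by positivity)
      _ = (4 * (m : ℝ) / σ ^ 2) * S := by ring
  linarith
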